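/- arXiv:math/0509481 — 3 statements merged into one kernel-verified Lean document; each statement's English description precedes it below -/
import Mathlib

section
/- Let N ≥ 2, let A be a Z_N-graded associative unital algebra over C, let q be a primitive N-th root of unity, and let v ∈ A have grading 1 with v^N = α·e for some α ∈ C, where e is the unit. Then the map d_v(w) = vw - q^{|w|} wv satisfies d_v^N(w) = 0 for every homogeneous w ∈ A. -/
open Polynomial Finset

/-- In a commutative domain with a primitive `N`-th root of unity `r`,
`∏_{j<N} (x - r^{c+j} y) = x^N - y^N`. -/
lemma key_prod_range {N : ℕ} (hN : 0 < N) {S : Type*} [CommRing S] [IsDomain S]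
    {r : S} (hr : IsPrimitiveRoot r N) (x y : S) (c : ℕ) :
    ∏ j ∈ Finset.range N, (x - r ^ (c + j) * y) = x ^ N - y ^ N := by
  rw [hr.pow_sub_pow_eq_prod_sub_mul x y hN]
  have hr0 : r ≠ 0 := by
    intro h
    exact one_ne_zero ((hr.pow_eq_one).symm.trans (by rw [h, zero_pow hN.ne']))
  have hmaps : ∀ j ∈ Finset.range N, r ^ (c + j) ∈ nthRootsFinset N (1 : S) := by
    intro j _
    rw [mem_nthRootsFinset hN, ← pow_mul, mul_comm, pow_mul, hr.pow_eq_one, one_pow]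
  have hinj : Set.InjOn (fun j => r ^ (c + j)) (Finset.range N) := by
    intro j1 h1 j2 h2 h
    simp only [pow_add] at h
    have := mul_left_cancel₀ (pow_ne_zero c hr0) h
    exact hr.pow_inj (Finset.mem_range.mp h1) (Finset.mem_range.mp h2) this
  have hsurj : Set.SurjOn (fun j => r ^ (c + j)) (Finset.range N) (nthRootsFinset N (1 : S)) := by
    intro ζ hζ
    obtain ⟨j, hj, hj2⟩ := Set.surj_on_of_inj_on_of_ncard_le
      (s := (Finset.range N : Set ℕ)) (t := (nthRootsFinset N (1 : S) : Set S))
      (fun j _ => r ^ (c + j)) (fun j hj => hmaps j hj)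
      (fun j1 j2 h1 h2 h => hinj h1 h2 h)
      (by rw [Set.ncard_coe_finset, Set.ncard_coe_finset, hr.card_nthRootsFinset,
        Finset.card_range]) (Finset.finite_toSet _) ζ hζ
    exact ⟨j, hj, hj2.symm⟩
  exact Finset.prod_nbij (fun j => r ^ (c + j)) hmaps hinj hsurj (fun _ _ => rfl)

/-- Theorem 1.1: if `A` is a `ℤ_N`-graded algebra, `q` a primitive `N`-th root of unity,
`v` of grading 1 with `v^N = α • 1`, then `d_v^N w = 0` for every homogeneous `w`.
Here `D j = d_v^j w` is the iterated `q`-differential, `d_v` acting on an element of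
grading `i + j` by `u ↦ v u - q^{|u|} u v`. -/
theorem stmt6 {N : ℕ} (hN : 2 ≤ N) {A : Type*} [Ring A] [Algebra ℂ A]
    (𝒜 : ZMod N → Submodule ℂ A) [GradedRing 𝒜]
    (q : ℂ) (hq : IsPrimitiveRoot q N)
    (v : A) (hv : v ∈ 𝒜 1) (α : ℂ) (hvN : v ^ N = α • (1 : A))
    (i : ZMod N) (w : A) (hw : w ∈ 𝒜 i)
    (D : ℕ → A) (hD0 : D 0 = w)
    (hDs : ∀ j : ℕ, D (j + 1) = v * D j - q ^ (i.val + j) • (D j * v)) :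
    D N = 0 := by
  have hN0 : 0 < N := by omega
  set L : Module.End ℂ A := LinearMap.mulLeft ℂ v with hL
  set R : Module.End ℂ A := LinearMap.mulRight ℂ v with hR
  have hLR : Commute L R := by
    show L * R = R * L
    ext a
    simp [hL, hR, Module.End.mul_apply, mul_assoc]
  -- the evaluation hom ℂ[X][Y] →+* End A, X ↦ L, Y ↦ R
  set f1 : ℂ →+* Module.End ℂ A := algebraMap ℂ (Module.End ℂ A) with hf1
  have hc1 : ∀ a : ℂ, Commute (f1 a) L := fun a => Algebra.commutes a L
  set ψ : Polynomial ℂ →+* Module.End ℂ A := eval₂RingHom' f1 L hc1 with hψ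
  have hψR : ∀ p : Polynomial ℂ, Commute (ψ p) R := by
    intro p
    induction p using Polynomial.induction_on' with
    | add p q hp hq => rw [map_add]; exact hp.add_left hq
    | monomial n a =>
      rw [← Polynomial.C_mul_X_pow_eq_monomial, map_mul, map_pow]
      have h1 : ψ (Polynomial.C a) = f1 a := by
        simp [hψ, eval₂RingHom'_apply, eval₂_C]
      have h2 : ψ Polynomial.X = L := by
        simp [hψ, eval₂RingHom'_apply, eval₂_X]
      rw [h1, h2]
      exact Commute.mul_left (Algebra.commutes a R) (hLR.pow_left n)
  set Φ : Polynomial (Polynomial ℂ) →+* Module.End ℂ A := eval₂RingHom' ψ R hψR with hΦ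
  have hΦa : Φ (Polynomial.C Polynomial.X) = L := by
    simp [hΦ, hψ, eval₂RingHom'_apply, eval₂_C, eval₂_X]
  have hΦb : Φ Polynomial.X = R := by
    simp [hΦ, eval₂RingHom'_apply, eval₂_X]
  have hΦq : ∀ z : ℂ, Φ (algebraMap ℂ (Polynomial (Polynomial ℂ)) z) = f1 z := by
    intro z
    have : algebraMap ℂ (Polynomial (Polynomial ℂ)) z
        = Polynomial.C (Polynomial.C z) := rfl
    rw [this]
    simp [hΦ, hψ, eval₂RingHom'_apply, eval₂_C]
  -- the key identity in ℂ[X][Y]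
  have hqT : IsPrimitiveRoot (algebraMap ℂ (Polynomial (Polynomial ℂ)) q) N :=
    hq.map_of_injective (algebraMap ℂ (Polynomial (Polynomial ℂ))).injective
  have hT := key_prod_range hN0 hqT (Polynomial.C Polynomial.X) Polynomial.X i.val
  -- D n is the image of the partial products applied to w
  have hmain : ∀ n : ℕ, D n = (Φ (∏ j ∈ Finset.range n,
      (Polynomial.C Polynomial.X
        - algebraMap ℂ (Polynomial (Polynomial ℂ)) q ^ (i.val + j) * Polynomial.X))) w := by
    intro n
    induction n with
    | zero => simp [hD0]
    | succ n ih =>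
      rw [hDs n, Finset.prod_range_succ_comm, map_mul, Module.End.mul_apply, ← ih,
        map_sub, hΦa, map_mul, map_pow, hΦq, hΦb]
      have : (f1 q) ^ (i.val + n) * R = (q ^ (i.val + n)) • R := by
        rw [hf1, ← map_pow, ← Algebra.smul_def]
      rw [this]
      simp [hL, hR]
  have := hmain N
  rw [hT] at this
  rw [this, map_sub, map_pow, map_pow, hΦa, hΦb, hL, hR, LinearMap.pow_mulLeft,
    LinearMap.pow_mulRight, LinearMap.sub_apply, LinearMap.mulLeft_apply,
    LinearMap.mulRight_apply, hvN, smul_mul_assoc, mul_smul_comm, one_mul, mul_one, sub_self]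
end

section
/- In the reduced quantum plane, the element v = y has grading 1 and satisfies v^N = 1; consequently, with q a primitive N-th root of unity, the map d(w) = yw - q^{|w|} wy is an N-differential on C_rq, i.e., it satisfies the graded q-Leibniz rule and d^N = 0. -/
open Finset Polynomial

private lemma aux_pow_mod {N : ℕ} {q : ℂ} (hqN : q ^ N = 1) (a : ℕ) :
    q ^ a = q ^ (a % N) := by
  conv_lhs => rw [← Nat.div_add_mod a N]
  rw [pow_add, pow_mul, hqN, one_pow, one_mul]

private lemma aux_c {N : ℕ} (hN : 0 < N) {q : ℂ} (hq : IsPrimitiveRoot q N) (k : ℕ)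
    (a b : ℂ) : ∏ j ∈ Finset.range N, (a - q ^ (k + j) * b) = a ^ N - b ^ N := by
  haveI : NeZero N := ⟨hN.ne'⟩
  have hqN : q ^ N = 1 := hq.pow_eq_one
  have hq0 : q ≠ 0 := by
    intro h
    rw [h, zero_pow hN.ne'] at hqN
    exact zero_ne_one hqN
  rw [hq.pow_sub_pow_eq_prod_sub_mul a b hN]
  refine Finset.prod_nbij (fun j => q ^ (k + j)) ?_ ?_ ?_ (fun _ _ => rfl)
  · intro j _
    rw [Polynomial.mem_nthRootsFinset hN, ← pow_mul, mul_comm, pow_mul, hqN, one_pow]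
  · intro i hi j hj H
    simp only [Finset.coe_range, Set.mem_Iio] at hi hj
    dsimp only at H
    rw [pow_add, pow_add] at H
    exact hq.pow_inj hi hj (mul_left_cancel₀ (pow_ne_zero _ hq0) H)
  · intro ζ hζ
    simp only [Finset.coe_range, Set.mem_image, Set.mem_Iio]
    have hζ1 : ζ ^ N = 1 := (Polynomial.mem_nthRootsFinset hN 1).1 (by simpa using hζ)
    obtain ⟨m, hm, rfl⟩ := hq.eq_pow_of_pow_eq_one hζ1
    refine ⟨(m + (N - k % N)) % N, Nat.mod_lt _ hN, ?_⟩
    rw [pow_add, ← aux_pow_mod hqN (m + (N - k % N)), pow_add, aux_pow_mod hqN k,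
      ← mul_assoc, mul_comm (q ^ (k % N)), mul_assoc, ← pow_add,
      Nat.add_sub_cancel' (Nat.mod_lt k hN).le, hqN, mul_one]

private lemma aux_P {N : ℕ} (hN : 0 < N) {q : ℂ} (hq : IsPrimitiveRoot q N) (k : ℕ) :
    (∏ j ∈ Finset.range N,
      (MvPolynomial.X 0 - MvPolynomial.C (q ^ (k + j)) * MvPolynomial.X 1)
        : MvPolynomial (Fin 2) ℂ) = MvPolynomial.X 0 ^ N - MvPolynomial.X 1 ^ N := by
  apply MvPolynomial.funext
  intro x
  simp only [map_prod, map_sub, map_pow, map_mul, MvPolynomial.eval_X, MvPolynomial.eval_C]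
  exact aux_c hN hq k (x 0) (x 1)

set_option maxHeartbeats 1000000 in
/-- In the reduced quantum plane, `v = y` has grading 1 and `v^N = 1`; consequently the
map `d(w) = yw - q^{|w|} wy` is an `N`-differential: it satisfies the graded `q`-Leibniz
rule on homogeneous elements, and `d^N = 0` (with `D j = d^j w` the iteration of `d`
starting from a homogeneous `w` of grading `k`). -/
theorem stmt11 {A : Type*} [Ring A] [Algebra ℂ A] (N : ℕ) (hN : 2 ≤ N)
    (q : ℂ) (hq : IsPrimitiveRoot q N) (x y : A)
    (hxy : x * y = q • (y * x)) (hxN : x ^ N = 1) (hyN : y ^ N = 1) :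
    (y ∈ Submodule.span ℂ {a : A | ∃ l < N, a = y ^ (1 : ZMod N).val * x ^ l}) ∧
    (y ^ N = 1) ∧
    (∀ k k' : ZMod N, ∀ w ∈ Submodule.span ℂ {a : A | ∃ l < N, a = y ^ k.val * x ^ l},
      ∀ w' ∈ Submodule.span ℂ {a : A | ∃ l < N, a = y ^ k'.val * x ^ l},
      y * (w * w') - q ^ (k + k').val • (w * w' * y) =
        (y * w - q ^ k.val • (w * y)) * w' +
          q ^ k.val • (w * (y * w' - q ^ k'.val • (w' * y)))) ∧
    (∀ k : ZMod N, ∀ w ∈ Submodule.span ℂ {a : A | ∃ l < N, a = y ^ k.val * x ^ l},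
      ∀ D : ℕ → A, D 0 = w →
        (∀ j : ℕ, D (j + 1) = y * D j - q ^ (k.val + j) • (D j * y)) → D N = 0) := by
  haveI : NeZero N := ⟨by omega⟩
  haveI : Fact (1 < N) := ⟨by omega⟩
  have hN0 : 0 < N := by omega
  have hqN : q ^ N = 1 := hq.pow_eq_one
  refine ⟨?_, hyN, ?_, ?_⟩
  · apply Submodule.subset_span
    exact ⟨0, hN0, by rw [ZMod.val_one, pow_one, pow_zero, mul_one]⟩
  · intro k k' w _ w' _
    have hval : q ^ (k + k').val = q ^ k.val * q ^ k'.val := by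
      rw [ZMod.val_add, ← aux_pow_mod hqN, pow_add]
    rw [hval]
    simp only [sub_mul, mul_sub, smul_mul_assoc, mul_smul_comm, smul_sub, smul_smul, mul_assoc]
    abel
  · intro k w _ D hD0 hDrec
    set φ : MvPolynomial (Fin 2) ℂ →ₗ[ℂ] A :=
      (Finsupp.lift A ℂ (Fin 2 →₀ ℕ) (fun e => y ^ e 0 * w * y ^ e 1)).comp
        (AddMonoidAlgebra.coeffLinearEquiv ℂ).toLinearMap with hφ
    have hmono : ∀ (e : Fin 2 →₀ ℕ) (c : ℂ),
        φ (MvPolynomial.monomial e c) = c • (y ^ e 0 * w * y ^ e 1) := by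
      intro e c
      rw [hφ]
      show ((Finsupp.lift A ℂ (Fin 2 →₀ ℕ)) (fun e => y ^ e 0 * w * y ^ e 1))
        (Finsupp.single e c) = _
      rw [Finsupp.lift_apply]
      exact Finsupp.sum_single_index (by simp)
    have hX0 : ∀ p : MvPolynomial (Fin 2) ℂ, φ (p * MvPolynomial.X 0) = y * φ p := by
      intro p
      induction p using MvPolynomial.induction_on' with
      | monomial e a =>
        rw [← pow_one (MvPolynomial.X (0 : Fin 2)), ← MvPolynomial.monomial_add_single,
          hmono, hmono]
        have h0 : (e + Finsupp.single (0 : Fin 2) (1 : ℕ) : Fin 2 →₀ ℕ) 0 = e 0 + 1 := by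
          simp [Finsupp.add_apply]
        have h1 : (e + Finsupp.single (0 : Fin 2) (1 : ℕ) : Fin 2 →₀ ℕ) 1 = e 1 := by
          simp [Finsupp.add_apply, Finsupp.single_apply]
        rw [h0, h1, pow_succ', mul_assoc, mul_assoc, mul_smul_comm, mul_assoc]
      | add p1 p2 ih1 ih2 =>
        rw [add_mul, map_add, ih1, ih2, map_add, mul_add]
    have hX1 : ∀ p : MvPolynomial (Fin 2) ℂ, φ (p * MvPolynomial.X 1) = φ p * y := by
      intro p
      induction p using MvPolynomial.induction_on' with
      | monomial e a =>
        rw [← pow_one (MvPolynomial.X (1 : Fin 2)), ← MvPolynomial.monomial_add_single,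
          hmono, hmono]
        have h0 : (e + Finsupp.single (1 : Fin 2) (1 : ℕ) : Fin 2 →₀ ℕ) 0 = e 0 := by
          simp [Finsupp.add_apply, Finsupp.single_apply]
        have h1 : (e + Finsupp.single (1 : Fin 2) (1 : ℕ) : Fin 2 →₀ ℕ) 1 = e 1 + 1 := by
          simp [Finsupp.add_apply]
        rw [h0, h1, pow_succ, smul_mul_assoc]
        simp [mul_assoc]
      | add p1 p2 ih1 ih2 =>
        rw [add_mul, map_add, ih1, ih2, map_add, add_mul]
    have hC : ∀ (c : ℂ) (p : MvPolynomial (Fin 2) ℂ), φ (MvPolynomial.C c * p) = c • φ p := by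
      intro c p
      rw [← MvPolynomial.smul_eq_C_mul, map_smul]
    have hDn : ∀ n : ℕ, D n = φ (∏ j ∈ Finset.range n,
        (MvPolynomial.X 0 - MvPolynomial.C (q ^ (k.val + j)) * MvPolynomial.X 1)) := by
      intro n
      induction n with
      | zero =>
        rw [Finset.prod_range_zero, hD0, ← MvPolynomial.C_1, MvPolynomial.C_apply, hmono]
        simp
      | succ n ih =>
        rw [hDrec n, ih, Finset.prod_range_succ, mul_sub, map_sub, hX0, mul_left_comm,
          hC, hX1]
    rw [hDn N, aux_P hN0 hq k.val, map_sub, MvPolynomial.X_pow_eq_monomial,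
      MvPolynomial.X_pow_eq_monomial, hmono, hmono]
    simp [Finsupp.single_apply, hyN]
end

section
/- For each k, the subspace C^k_rq of homogeneous elements of grading k in the reduced quantum plane is a free right module of rank 1 over C^0_rq, generated by y^k: every w ∈ C^k_rq can be written uniquely as w = y^k r with r ∈ C^0_rq, and r = y^{N-k} w. -/
/-- The subspace `ℂᵏ_rq` of homogeneous elements of grading `k` of the reduced quantum
plane is a free right module of rank 1 over `ℂ⁰_rq`, generated by `y^k`: every `w` of
grading `k` is uniquely `w = y^k r` with `r ∈ ℂ⁰_rq`, and `r = y^{N-k} w`. -/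
theorem stmt12 {A : Type*} [Ring A] [Algebra ℂ A] (N : ℕ) (hN : 2 ≤ N)
    (q : ℂ) (hq : IsPrimitiveRoot q N) (x y : A)
    (hxy : x * y = q • (y * x)) (hxN : x ^ N = 1) (hyN : y ^ N = 1)
    (k : ℕ) (hk : k < N) (w : A)
    (hw : w ∈ Submodule.span ℂ {a : A | ∃ l < N, a = y ^ k * x ^ l}) :
    (∃! r : A, r ∈ Submodule.span ℂ {a : A | ∃ l < N, a = x ^ l} ∧ w = y ^ k * r) ∧
    (∀ r ∈ Submodule.span ℂ {a : A | ∃ l < N, a = x ^ l},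
      w = y ^ k * r → r = y ^ (N - k) * w) := by
  have hyk : y ^ (N - k) * y ^ k = 1 := by
    rw [← pow_add, Nat.sub_add_cancel hk.le, hyN]
  have hky : y ^ k * y ^ (N - k) = 1 := by
    rw [← pow_add, ← Nat.add_sub_assoc hk.le, Nat.add_sub_cancel_left, hyN]
  have key : ∀ r : A, w = y ^ k * r → r = y ^ (N - k) * w := by
    intro r hr
    rw [hr, ← mul_assoc, hyk, one_mul]
  have hmem : y ^ (N - k) * w ∈ Submodule.span ℂ {a : A | ∃ l < N, a = x ^ l} := by
    refine Submodule.span_induction ?_ ?_ ?_ ?_ hw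
    · rintro a ⟨l, hl, rfl⟩
      rw [← mul_assoc, hyk, one_mul]
      exact Submodule.subset_span ⟨l, hl, rfl⟩
    · simp
    · intro a b _ _ ha hb
      rw [mul_add]; exact add_mem ha hb
    · intro c a _ ha
      rw [mul_smul_comm]; exact Submodule.smul_mem _ _ ha
  refine ⟨⟨y ^ (N - k) * w, ⟨hmem, ?_⟩, ?_⟩, fun r _ hr => key r hr⟩
  · rw [← mul_assoc, hky, one_mul]
  · rintro r ⟨_, hr⟩
    exact key r hr
end
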